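/- arXiv:1504.01085 — 6 statements merged into one kernel-verified Lean document; each statement's English description precedes it below -/
import Mathlib

section
/- Let A be an m×N real matrix satisfying the strong lower restricted isometry property of order 2k with constant θ₋, i.e., θ₋‖x‖₂² ≤ min_{I⊆[m], |I|≥m/2} ‖A_I x‖₂² for all 2k-sparse x ∈ ℝ^N. Then for any k-sparse vectors x, y ∈ ℝ^N, ‖|Ax| − |Ay|‖₂² ≥ θ₋ · min(‖x−y‖₂², ‖x+y‖₂²), where |Ax| denotes the vector of absolute values of the entries of Ax. -/
open Finset

noncomputable section

/-- A vector is `k`-sparse if it has at most `k` nonzero entries. -/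
def sparse {N : ℕ} (k : ℕ) (x : Fin N → ℝ) : Prop :=
  (Finset.univ.filter (fun i => x i ≠ 0)).card ≤ k

/-- Sparsity with a real bound (used for orders like `t·k` with `t` real). -/
def sparseR {N : ℕ} (k : ℝ) (x : Fin N → ℝ) : Prop :=
  ((Finset.univ.filter (fun i => x i ≠ 0)).card : ℝ) ≤ k

/-- The ℓ₁ norm. -/
def l1 {N : ℕ} (x : Fin N → ℝ) : ℝ := ∑ i, |x i|

/-- The squared ℓ₂ norm. -/
def l2sq {N : ℕ} (x : Fin N → ℝ) : ℝ := ∑ i, (x i) ^ 2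

/-- The ℓ₂ norm. -/
def l2 {N : ℕ} (x : Fin N → ℝ) : ℝ := Real.sqrt (l2sq x)

/-- The ℓ_p norm for real `p ≥ 1`. -/
def lpnorm {N : ℕ} (p : ℝ) (x : Fin N → ℝ) : ℝ := (∑ i, |x i| ^ p) ^ (1 / p)

/-- Best `k`-term approximation error in ℓ₁. -/
def sigma1 {N : ℕ} (k : ℕ) (x : Fin N → ℝ) : ℝ :=
  sInf {t | ∃ z : Fin N → ℝ, sparse k z ∧ t = l1 (x - z)}

/-- Best `k`-term approximation error in a general norm `X`. -/
def sigmaX {N : ℕ} (X : (Fin N → ℝ) → ℝ) (k : ℕ) (x : Fin N → ℝ) : ℝ :=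
  sInf {t | ∃ z : Fin N → ℝ, sparse k z ∧ t = X (x - z)}

/-- Best `k`-term approximation error in the ℓ_q norm. -/
def sigmaQ {N : ℕ} (q : ℝ) (k : ℕ) (x : Fin N → ℝ) : ℝ :=
  sInf {t | ∃ z : Fin N → ℝ, sparse k z ∧ t = lpnorm q (x - z)}

/-- The entrywise absolute value of `A x`. -/
def absMulVec {m N : ℕ} (A : Matrix (Fin m) (Fin N) ℝ) (x : Fin N → ℝ) : Fin m → ℝ :=
  fun i => |A.mulVec x i|

/-- `X` is a norm on `ℝ^N`: triangle inequality, absolute homogeneity, definiteness. -/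
def IsNorm {N : ℕ} (X : (Fin N → ℝ) → ℝ) : Prop :=
  (∀ x y, X (x + y) ≤ X x + X y) ∧ (∀ (c : ℝ) (x), X (c • x) = |c| * X x) ∧
  (∀ x, X x = 0 → x = 0)


lemma absSubSq (a b : ℝ) : (|a| - |b|)^2 = min ((a-b)^2) ((a+b)^2) := by
  rcases le_total 0 (a*b) with h|h
  · rw [min_eq_left (by nlinarith)]
    have hab : |a| * |b| = a*b := by rw [← abs_mul, abs_of_nonneg h]
    nlinarith [sq_abs a, sq_abs b]
  · rw [min_eq_right (by nlinarith)]
    have hab : |a| * |b| = -(a*b) := by rw [← abs_mul, abs_of_nonpos h]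
    nlinarith [sq_abs a, sq_abs b]

lemma sparse_comb {N k : ℕ} {x y z : Fin N → ℝ} (hx : sparse k x) (hy : sparse k y)
    (hz : ∀ i, z i ≠ 0 → x i ≠ 0 ∨ y i ≠ 0) : sparse (2*k) z := by
  unfold sparse at *
  have hsub : (Finset.univ.filter (fun i => z i ≠ 0)) ⊆
      (Finset.univ.filter (fun i => x i ≠ 0)) ∪ (Finset.univ.filter (fun i => y i ≠ 0)) := by
    intro i hi
    simp only [Finset.mem_filter, Finset.mem_union, Finset.mem_univ, true_and] at *
    exact hz i hi
  calc (Finset.univ.filter (fun i => z i ≠ 0)).card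
      ≤ ((Finset.univ.filter (fun i => x i ≠ 0)) ∪ (Finset.univ.filter (fun i => y i ≠ 0))).card :=
        Finset.card_le_card hsub
    _ ≤ _ + _ := Finset.card_union_le _ _
    _ ≤ 2*k := by omega

/-- strong lower RIP of order 2k implies stability of the phaseless map. -/
theorem stmt0 {m N k : ℕ} (A : Matrix (Fin m) (Fin N) ℝ) (θminus : ℝ)
    (hSRIP : ∀ x : Fin N → ℝ, sparse (2 * k) x →
      ∀ I : Finset (Fin m), (m : ℝ) / 2 ≤ I.card →
        θminus * l2sq x ≤ ∑ i ∈ I, (A.mulVec x i) ^ 2) :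
    ∀ x y : Fin N → ℝ, sparse k x → sparse k y →
      θminus * min (l2sq (x - y)) (l2sq (x + y)) ≤
        ∑ i, (|A.mulVec x i| - |A.mulVec y i|) ^ 2 := by
  intro x y hx hy
  rcases le_or_gt θminus 0 with hθ | hθ
  · have h1 : 0 ≤ min (l2sq (x - y)) (l2sq (x + y)) := by
      apply le_min <;> exact Finset.sum_nonneg (fun i _ => sq_nonneg _)
    have h2 : (0:ℝ) ≤ ∑ i, (|A.mulVec x i| - |A.mulVec y i|) ^ 2 :=
      Finset.sum_nonneg (fun i _ => sq_nonneg _)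
    nlinarith
  have hsub : sparse (2*k) (x - y) := by
    apply sparse_comb hx hy
    intro i hi
    by_contra hc
    push_neg at hc
    simp [Pi.sub_apply, hc.1, hc.2] at hi
  have hadd : sparse (2*k) (x + y) := by
    apply sparse_comb hx hy
    intro i hi
    by_contra hc
    push_neg at hc
    simp [Pi.add_apply, hc.1, hc.2] at hi
  set I : Finset (Fin m) := Finset.univ.filter
    (fun i => (A.mulVec x i - A.mulVec y i)^2 ≤ (A.mulVec x i + A.mulVec y i)^2) with hI
  have hcards : I.card + Iᶜ.card = m := by
    rw [Finset.card_add_card_compl]; simp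
  have key : ∀ i, (|A.mulVec x i| - |A.mulVec y i|)^2
      = min ((A.mulVec x i - A.mulVec y i)^2) ((A.mulVec x i + A.mulVec y i)^2) :=
    fun i => absSubSq _ _
  have hsubv : ∀ i, A.mulVec (x - y) i = A.mulVec x i - A.mulVec y i := by
    intro i; rw [Matrix.mulVec_sub]; rfl
  have haddv : ∀ i, A.mulVec (x + y) i = A.mulVec x i + A.mulVec y i := by
    intro i; rw [Matrix.mulVec_add]; rfl
  rcases le_or_gt ((m:ℝ)/2) I.card with hc | hc
  · have h1 := hSRIP (x - y) hsub I hc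
    calc θminus * min (l2sq (x - y)) (l2sq (x + y))
        ≤ θminus * l2sq (x - y) := by
          apply mul_le_mul_of_nonneg_left (min_le_left _ _) hθ.le
      _ ≤ ∑ i ∈ I, (A.mulVec (x - y) i)^2 := h1
      _ = ∑ i ∈ I, (|A.mulVec x i| - |A.mulVec y i|)^2 := by
          apply Finset.sum_congr rfl
          intro i hi
          rw [hsubv, key i, min_eq_left]
          simpa [hI] using hi
      _ ≤ ∑ i, (|A.mulVec x i| - |A.mulVec y i|)^2 := by
          apply Finset.sum_le_sum_of_subset_of_nonneg (Finset.subset_univ _)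
          intro i _ _; exact sq_nonneg _
  · have hc2 : (m:ℝ)/2 ≤ Iᶜ.card := by
      have : (I.card : ℝ) + Iᶜ.card = m := by exact_mod_cast hcards
      linarith
    have h1 := hSRIP (x + y) hadd Iᶜ hc2
    calc θminus * min (l2sq (x - y)) (l2sq (x + y))
        ≤ θminus * l2sq (x + y) := by
          apply mul_le_mul_of_nonneg_left (min_le_right _ _) hθ.le
      _ ≤ ∑ i ∈ Iᶜ, (A.mulVec (x + y) i)^2 := h1
      _ = ∑ i ∈ Iᶜ, (|A.mulVec x i| - |A.mulVec y i|)^2 := by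
          apply Finset.sum_congr rfl
          intro i hi
          rw [haddv, key i, min_eq_right]
          have : ¬ (A.mulVec x i - A.mulVec y i)^2 ≤ (A.mulVec x i + A.mulVec y i)^2 := by
            simpa [hI] using hi
          linarith
      _ ≤ ∑ i, (|A.mulVec x i| - |A.mulVec y i|)^2 := by
          apply Finset.sum_le_sum_of_subset_of_nonneg (Finset.subset_univ _)
          intro i _ _; exact sq_nonneg _
end
end

section
/- Let a₁ ≥ a₂ ≥ ⋯ ≥ a_m ≥ 0 be real numbers, let r ≤ m and λ ≥ 0 satisfy Σ_{i=1}^{r} a_i + λ ≥ Σ_{i=r+1}^{m} a_i. Then for all real α ≥ 1, Σ_{j=r+1}^{m} a_j^α ≤ r·((Σ_{i=1}^{r} a_i^α / r)^{1/α} + λ/r)^α. -/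
open Finset

noncomputable section

/-- Lemma 5.3, sum comparison for nonincreasing nonnegative sequences. -/
theorem stmt1 (m r : ℕ) (a : ℕ → ℝ) (lam : ℝ)
    (hr : 0 < r) (hrm : r ≤ m)
    (hmono : ∀ i j : ℕ, i ≤ j → j < m → a j ≤ a i)
    (hnonneg : ∀ i : ℕ, i < m → 0 ≤ a i)
    (hlam : 0 ≤ lam)
    (hsum : ∑ i ∈ Finset.Ico r m, a i ≤ ∑ i ∈ Finset.range r, a i + lam) :
    ∀ α : ℝ, 1 ≤ α →
      ∑ j ∈ Finset.Ico r m, a j ^ α ≤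
        (r : ℝ) * (((∑ i ∈ Finset.range r, a i ^ α) / r) ^ (1 / α) + lam / r) ^ α := by
  intro α hα
  have hα0 : (0:ℝ) < α := lt_of_lt_of_le one_pos hα
  have hrpos : (0:ℝ) < (r:ℝ) := Nat.cast_pos.mpr hr
  set S : ℝ := ∑ i ∈ Finset.range r, a i ^ α with hS
  set P : ℝ := (S / r) ^ (1 / α) with hP
  set M : ℝ := P + lam / r with hM
  have hanonneg : ∀ i ∈ Finset.range r, 0 ≤ a i := fun i hi =>
    hnonneg i (lt_of_lt_of_le (Finset.mem_range.mp hi) hrm)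
  have hSnonneg : 0 ≤ S := Finset.sum_nonneg fun i hi =>
    Real.rpow_nonneg (hanonneg i hi) α
  have hPnonneg : 0 ≤ P := Real.rpow_nonneg (by positivity) _
  have hMnonneg : 0 ≤ M := by rw [hM]; exact add_nonneg hPnonneg (by positivity)
  -- each tail entry is at most P
  have htail : ∀ j ∈ Finset.Ico r m, a j ≤ P := by
    intro j hj
    obtain ⟨hrj, hjm⟩ := Finset.mem_Ico.mp hj
    have haj : 0 ≤ a j := hnonneg j hjm
    have hjα : (r:ℝ) * a j ^ α ≤ S := by
      have : ∀ i ∈ Finset.range r, a j ^ α ≤ a i ^ α := by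
        intro i hi
        exact Real.rpow_le_rpow haj (hmono i j (le_trans (le_of_lt (Finset.mem_range.mp hi)) hrj) hjm) (le_of_lt hα0)
      calc (r:ℝ) * a j ^ α = ∑ _i ∈ Finset.range r, a j ^ α := by
            simp [mul_comm]
        _ ≤ S := Finset.sum_le_sum this
    have h2 : a j ^ α ≤ S / r := (le_div_iff₀' hrpos).mpr hjα
    have h3 : (a j ^ α) ^ (1/α) ≤ (S / r) ^ (1/α) :=
      Real.rpow_le_rpow (by positivity) h2 (by positivity)
    rw [one_div, Real.rpow_rpow_inv haj (ne_of_gt hα0)] at h3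
    rw [hP, one_div]; exact h3
  -- power mean: ∑ head ≤ r * P
  have hhead : ∑ i ∈ Finset.range r, a i ≤ (r:ℝ) * P := by
    have hw : ∀ i ∈ Finset.range r, (0:ℝ) ≤ 1 / r := fun i _ => by positivity
    have hw' : ∑ _i ∈ Finset.range r, (1:ℝ) / r = 1 := by
      simp [Finset.sum_const]
      field_simp
    have := Real.arith_mean_le_rpow_mean (Finset.range r) (fun _ => 1 / r) a hw hw' hanonneg hα
    have heq1 : ∑ i ∈ Finset.range r, (1:ℝ)/r * a i = (∑ i ∈ Finset.range r, a i) / r := by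
      rw [Finset.sum_div]; apply Finset.sum_congr rfl; intros; ring
    have heq2 : ∑ i ∈ Finset.range r, (1:ℝ)/r * a i ^ α = S / r := by
      rw [hS, Finset.sum_div]; apply Finset.sum_congr rfl; intros; ring
    rw [heq1, heq2] at this
    calc ∑ i ∈ Finset.range r, a i = (r:ℝ) * ((∑ i ∈ Finset.range r, a i) / r) := by
          field_simp
      _ ≤ (r:ℝ) * P := by
          apply mul_le_mul_of_nonneg_left _ (le_of_lt hrpos)
          exact this
  -- tail sum bound
  have htailsum : ∑ j ∈ Finset.Ico r m, a j ≤ (r:ℝ) * M := by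
    calc ∑ j ∈ Finset.Ico r m, a j ≤ ∑ i ∈ Finset.range r, a i + lam := hsum
      _ ≤ (r:ℝ) * P + lam := by linarith
      _ = (r:ℝ) * M := by rw [hM]; field_simp
  rcases eq_or_lt_of_le hMnonneg with hM0 | hM0
  · -- M = 0: each a j = 0 on the tail
    have hP0 : P = 0 := by
      have hl : 0 ≤ lam / r := by positivity
      have := hM0.symm ▸ hM; nlinarith [hMnonneg]
    have : ∀ j ∈ Finset.Ico r m, a j ^ α = 0 := by
      intro j hj
      have h1 := htail j hj
      have h2 := hnonneg j ((Finset.mem_Ico.mp hj).2)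
      have : a j = 0 := le_antisymm (by rw [hP0] at h1; exact h1) h2
      rw [this, Real.zero_rpow (ne_of_gt hα0)]
    rw [Finset.sum_congr rfl this]
    simp
    rw [← hM0, Real.zero_rpow (ne_of_gt hα0)]
    simp
  · -- M > 0
    have key : ∀ j ∈ Finset.Ico r m, a j ^ α ≤ a j * M ^ (α - 1) := by
      intro j hj
      have haj : 0 ≤ a j := hnonneg j ((Finset.mem_Ico.mp hj).2)
      have hajM : a j ≤ M := le_trans (htail j hj) (by
        rw [hM]; have h4 : 0 ≤ lam / (r:ℝ) := by positivity
        linarith)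
      rcases eq_or_lt_of_le haj with h0 | h0
      · rw [← h0, Real.zero_rpow (ne_of_gt hα0)]; positivity
      · calc a j ^ α = a j * a j ^ (α - 1) := by
              rw [mul_comm, ← Real.rpow_add_one (ne_of_gt h0) (α - 1)]
              congr 1; ring
          _ ≤ a j * M ^ (α - 1) := by
              apply mul_le_mul_of_nonneg_left _ haj
              exact Real.rpow_le_rpow haj hajM (by linarith)
    calc ∑ j ∈ Finset.Ico r m, a j ^ α ≤ ∑ j ∈ Finset.Ico r m, a j * M ^ (α - 1) :=
          Finset.sum_le_sum key
      _ = (∑ j ∈ Finset.Ico r m, a j) * M ^ (α - 1) := by rw [Finset.sum_mul]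
      _ ≤ ((r:ℝ) * M) * M ^ (α - 1) := by
          apply mul_le_mul_of_nonneg_right htailsum (Real.rpow_nonneg hMnonneg _)
      _ = (r:ℝ) * M ^ α := by
          rw [mul_assoc]
          congr 1
          rw [mul_comm, ← Real.rpow_add_one (ne_of_gt hM0) (α - 1)]
          congr 1; ring
end
end

section
/- Let a₁ ≥ a₂ ≥ ⋯ ≥ a_m ≥ 0 satisfy Σ_{i=1}^{r} a_i ≥ Σ_{i=r+1}^{m} a_i for some r ≤ m. Then for all α ≥ 1, Σ_{j=r+1}^{m} a_j^α ≤ Σ_{i=1}^{r} a_i^α. -/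
open Finset

noncomputable section

/-- the `λ = 0` case of the sum comparison lemma. -/
theorem stmt2 (m r : ℕ) (a : ℕ → ℝ)
    (hr : 0 < r) (hrm : r ≤ m)
    (hmono : ∀ i j : ℕ, i ≤ j → j < m → a j ≤ a i)
    (hnonneg : ∀ i : ℕ, i < m → 0 ≤ a i)
    (hsum : ∑ i ∈ Finset.Ico r m, a i ≤ ∑ i ∈ Finset.range r, a i) :
    ∀ α : ℝ, 1 ≤ α →
      ∑ j ∈ Finset.Ico r m, a j ^ α ≤ ∑ i ∈ Finset.range r, a i ^ α := by
  intro α hα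
  rcases lt_or_ge r m with hrlt | hge
  · -- r < m
    have hpos : (0:ℝ) < α := by linarith
    have pow_split : ∀ x : ℝ, 0 ≤ x → x ^ α = x ^ (α - 1) * x := by
      intro x hx
      rcases eq_or_lt_of_le hx with h | h
      · rw [← h]
        simp [Real.zero_rpow hpos.ne']
      · rw [← Real.rpow_add_one h.ne', sub_add_cancel]
    have har : 0 ≤ a r := hnonneg r hrlt
    have hc : 0 ≤ a r ^ (α - 1) := Real.rpow_nonneg har _
    have key1 : ∀ j ∈ Finset.Ico r m, a j ^ α ≤ a r ^ (α - 1) * a j := by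
      intro j hj
      rw [Finset.mem_Ico] at hj
      have hja : 0 ≤ a j := hnonneg j hj.2
      have hle : a j ≤ a r := hmono r j hj.1 hj.2
      rw [pow_split _ hja]
      exact mul_le_mul_of_nonneg_right
        (Real.rpow_le_rpow hja hle (by linarith)) hja
    have key2 : ∀ i ∈ Finset.range r, a r ^ (α - 1) * a i ≤ a i ^ α := by
      intro i hi
      rw [Finset.mem_range] at hi
      have hia : 0 ≤ a i := hnonneg i (lt_of_lt_of_le hi hrlt.le)
      have hle : a r ≤ a i := hmono i r hi.le hrlt
      rw [pow_split _ hia]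
      exact mul_le_mul_of_nonneg_right
        (Real.rpow_le_rpow har hle (by linarith)) hia
    calc ∑ j ∈ Finset.Ico r m, a j ^ α
        ≤ ∑ j ∈ Finset.Ico r m, a r ^ (α - 1) * a j := Finset.sum_le_sum key1
      _ = a r ^ (α - 1) * ∑ j ∈ Finset.Ico r m, a j := by rw [Finset.mul_sum]
      _ ≤ a r ^ (α - 1) * ∑ i ∈ Finset.range r, a i :=
          mul_le_mul_of_nonneg_left hsum hc
      _ = ∑ i ∈ Finset.range r, a r ^ (α - 1) * a i := by rw [Finset.mul_sum]
      _ ≤ ∑ i ∈ Finset.range r, a i ^ α := Finset.sum_le_sum key2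
  · -- m ≤ r : tail is empty
    rw [Finset.Ico_eq_empty (by omega), Finset.sum_empty]
    exact Finset.sum_nonneg fun i hi =>
      Real.rpow_nonneg (hnonneg i (lt_of_lt_of_le (Finset.mem_range.mp hi) hrm)) _
end
end

section
/- Let s ≥ 1 be an integer and α > 0. Define T(α,s) := {u ∈ ℝ^n : ‖u‖_∞ ≤ α, ‖u‖₁ ≤ sα}. For v ∈ ℝ^n define U(α,s,v) := {u ∈ ℝ^n : supp(u) ⊆ supp(v), ‖u‖₀ ≤ s, ‖u‖₁ = ‖v‖₁, ‖u‖_∞ ≤ α}. Then v ∈ T(α,s) if and only if v lies in the convex hull of U(α,s,v). -/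
open Finset

noncomputable section

private lemma sign_mul_abs' (x : ℝ) (h : x ≠ 0) : Real.sign x * |x| = x := by
  rcases lt_or_gt_of_ne h with h'|h'
  · simp [Real.sign_of_neg h', abs_of_neg h']
  · simp [Real.sign_of_pos h', abs_of_pos h']

private lemma abs_sign' (x : ℝ) (h : x ≠ 0) : |Real.sign x| = 1 := by
  rcases lt_or_gt_of_ne h with h'|h'
  · simp [Real.sign_of_neg h']
  · simp [Real.sign_of_pos h']

private def Uset {n : ℕ} (s : ℕ) (α : ℝ) (v : Fin n → ℝ) : Set (Fin n → ℝ) :=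
  {u : Fin n → ℝ | Function.support u ⊆ Function.support v ∧ sparse s u ∧
      l1 u = l1 v ∧ ∀ i, |u i| ≤ α}

private lemma Uset_mono {n : ℕ} {s : ℕ} {α : ℝ} {w v : Fin n → ℝ}
    (h1 : Function.support w ⊆ Function.support v) (h2 : l1 w = l1 v) :
    Uset s α w ⊆ Uset s α v :=
  fun _ ⟨a, b, c, d⟩ => ⟨a.trans h1, b, c.trans h2, d⟩

private lemma two_le_B {n : ℕ} {s : ℕ} {α : ℝ} (hα : 0 < α) {v : Fin n → ℝ}
    (hb : ∀ i, |v i| ≤ α) (hl : l1 v ≤ s * α)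
    (hK : s < (univ.filter (fun i => v i ≠ 0)).card) :
    2 ≤ (univ.filter (fun i : Fin n => 0 < |v i| ∧ |v i| < α)).card := by
  set A := univ.filter (fun i : Fin n => |v i| = α) with hA
  set B := univ.filter (fun i : Fin n => 0 < |v i| ∧ |v i| < α) with hB
  set K := univ.filter (fun i : Fin n => v i ≠ 0) with hKdef
  have hdisj : Disjoint A B := by
    rw [Finset.disjoint_left]
    intro x hx hx'
    simp only [hA, hB, mem_filter] at hx hx'
    linarith [hx.2, hx'.2.2]
  have hKeq : K = A ∪ B := by
    ext x
    simp only [hA, hB, hKdef, mem_filter, mem_union, mem_univ, true_and]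
    constructor
    · intro hx
      rcases eq_or_lt_of_le (hb x) with h | h
      · exact Or.inl h
      · exact Or.inr ⟨abs_pos.mpr hx, h⟩
    · rintro (h | h)
      · intro h0; rw [h0] at h; simp at h; linarith
      · exact abs_pos.mp h.1
  have hcardK : K.card = A.card + B.card := by
    rw [hKeq, Finset.card_union_of_disjoint hdisj]
  -- sum bound
  have hsum : α * A.card + ∑ i ∈ B, |v i| ≤ (s : ℝ) * α := by
    have h1 : ∑ i ∈ A, |v i| = α * A.card := by
      rw [Finset.sum_congr rfl (fun x hx => by simp only [hA, mem_filter] at hx; exact hx.2)]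
      simp [mul_comm]
    have h2 : ∑ i ∈ A ∪ B, |v i| ≤ l1 v := by
      apply Finset.sum_le_sum_of_subset_of_nonneg (Finset.subset_univ _)
      intro i _ _; exact abs_nonneg _
    rw [Finset.sum_union hdisj, h1] at h2
    linarith
  by_contra hcon
  push_neg at hcon
  have hBle : B.card ≤ 1 := by omega
  have hAle : (A.card : ℝ) ≤ s := by
    have : (0:ℝ) ≤ ∑ i ∈ B, |v i| := Finset.sum_nonneg fun i _ => abs_nonneg _
    have := hsum
    nlinarith
  have hAle' : A.card ≤ s := by exact_mod_cast hAle
  have hBpos : 0 < B.card := by omega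
  obtain ⟨j, hj⟩ := Finset.card_pos.mp hBpos
  have hjB : 0 < |v j| := by
    simp only [hB, mem_filter] at hj; exact hj.2.1
  have hjle : |v j| ≤ ∑ i ∈ B, |v i| :=
    Finset.single_le_sum (fun i _ => abs_nonneg (v i)) hj
  have hAlt : (A.card : ℝ) < s := by nlinarith
  have hAlt' : A.card < s := by exact_mod_cast hAlt
  omega

private lemma key {n : ℕ} (s : ℕ) (α : ℝ) (hα : 0 < α) :
    ∀ b : ℕ, ∀ v : Fin n → ℝ,
      (univ.filter (fun i : Fin n => 0 < |v i| ∧ |v i| < α)).card ≤ b →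
      (∀ i, |v i| ≤ α) → l1 v ≤ s * α →
      v ∈ convexHull ℝ (Uset s α v) := by
  intro b
  induction b with
  | zero =>
    intro v hBcard hbound hl1
    by_cases hK : (univ.filter (fun i => v i ≠ 0)).card ≤ s
    · exact subset_convexHull ℝ _ ⟨subset_rfl, hK, rfl, hbound⟩
    · exact absurd (two_le_B hα hbound hl1 (not_le.mp hK)) (by omega)
  | succ b ih =>
    intro v hBcard hbound hl1
    by_cases hK : (univ.filter (fun i => v i ≠ 0)).card ≤ s
    · exact subset_convexHull ℝ _ ⟨subset_rfl, hK, rfl, hbound⟩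
    have hB2 := two_le_B hα hbound hl1 (not_le.mp hK)
    obtain ⟨i, hiB, j, hjB, hij⟩ := Finset.one_lt_card.mp hB2
    simp only [mem_filter, mem_univ, true_and] at hiB hjB
    have hvi : v i ≠ 0 := abs_pos.mp hiB.1
    have hvj : v j ≠ 0 := abs_pos.mp hjB.1
    -- the deformation
    set σi := Real.sign (v i) with hσi
    set σj := Real.sign (v j) with hσj
    have hσiv : σi * |v i| = v i := sign_mul_abs' _ hvi
    have hσjv : σj * |v j| = v j := sign_mul_abs' _ hvj
    have hσiabs : |σi| = 1 := abs_sign' _ hvi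
    have hσjabs : |σj| = 1 := abs_sign' _ hvj
    have main : ∀ t : ℝ, 0 ≤ |v i| + t → |v i| + t ≤ α → 0 ≤ |v j| - t → |v j| - t ≤ α →
        ∀ w : Fin n → ℝ,
        (w = fun k => if k = i then σi * (|v i| + t) else
                      if k = j then σj * (|v j| - t) else v k) →
        (∀ k, |w k| ≤ α) ∧ l1 w = l1 v ∧ Function.support w ⊆ Function.support v ∧
        (univ.filter (fun k : Fin n => 0 < |w k| ∧ |w k| < α)) ⊆
          (univ.filter (fun k : Fin n => 0 < |v k| ∧ |v k| < α)) ∧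
        |w i| = |v i| + t ∧ |w j| = |v j| - t := by
      intro t h1 h2 h3 h4 w hw
      have hwieq : w i = σi * (|v i| + t) := by rw [hw]; simp
      have hwjeq : w j = σj * (|v j| - t) := by rw [hw]; simp [Ne.symm hij]
      have hwi : |w i| = |v i| + t := by
        rw [hwieq, abs_mul, hσiabs, one_mul, abs_of_nonneg h1]
      have hwj : |w j| = |v j| - t := by
        rw [hwjeq, abs_mul, hσjabs, one_mul, abs_of_nonneg h3]
      have hwo : ∀ k, k ≠ i → k ≠ j → w k = v k := by
        intro k hki hkj
        rw [hw]; simp [hki, hkj]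
      refine ⟨?_, ?_, ?_, ?_, hwi, hwj⟩
      · intro k
        by_cases hki : k = i
        · rw [hki, hwi]; exact h2
        by_cases hkj : k = j
        · rw [hkj, hwj]; exact h4
        rw [hwo k hki hkj]; exact hbound k
      · have habs : ∀ k, |w k| = |v k| + (if k = i then t else if k = j then -t else 0) := by
          intro k
          by_cases hki : k = i
          · rw [hki, hwi]; simp
          by_cases hkj : k = j
          · rw [hkj, hwj]; simp [Ne.symm hij, hkj]; ring
          rw [hwo k hki hkj]; simp [hki, hkj]
        unfold l1
        rw [Finset.sum_congr rfl (fun k _ => habs k), Finset.sum_add_distrib]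
        have : ∑ k : Fin n, (if k = i then t else if k = j then -t else 0) = 0 := by
          have heq : ∀ k : Fin n, (if k = i then t else if k = j then -t else 0)
              = (if k = i then t else 0) + (if k = j then -t else 0) := by
            intro k
            by_cases hki : k = i
            · simp [hki, hij]
            · simp [hki]
          rw [Finset.sum_congr rfl (fun k _ => heq k), Finset.sum_add_distrib]
          simp
        rw [this, add_zero]
      · intro k hk
        simp only [Function.mem_support] at hk ⊢
        by_cases hki : k = i
        · rw [hki]; exact hvi
        by_cases hkj : k = j
        · rw [hkj]; exact hvj
        rw [hwo k hki hkj] at hk; exact hk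
      · intro k hk
        simp only [mem_filter, mem_univ, true_and] at hk ⊢
        by_cases hki : k = i
        · rw [hki]; exact hiB
        by_cases hkj : k = j
        · rw [hkj]; exact hjB
        rwa [hwo k hki hkj] at hk
    -- endpoints
    set tp := min (α - |v i|) (|v j|) with htp
    set tm := min (|v i|) (α - |v j|) with htm
    have htp0 : 0 < tp := lt_min (by linarith [hiB.2]) hjB.1
    have htm0 : 0 < tm := lt_min hiB.1 (by linarith [hjB.2])
    set w1 : Fin n → ℝ := fun k => if k = i then σi * (|v i| + tp) else
                      if k = j then σj * (|v j| - tp) else v k with hw1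
    set w2 : Fin n → ℝ := fun k => if k = i then σi * (|v i| + (-tm)) else
                      if k = j then σj * (|v j| - (-tm)) else v k with hw2
    have hm1 := main tp (by positivity) (by linarith [min_le_left (α - |v i|) (|v j|)])
      (by linarith [min_le_right (α - |v i|) (|v j|)]) (by linarith [abs_nonneg (v j), hbound j]) w1 hw1
    have hm2 := main (-tm) (by simp only [← sub_eq_add_neg]; linarith [min_le_left (|v i|) (α - |v j|)])
      (by simp only [← sub_eq_add_neg]; linarith [abs_nonneg (v i), hbound i])
      (by simp only [sub_neg_eq_add]; positivity)
      (by simp only [sub_neg_eq_add]; linarith [min_le_right (|v i|) (α - |v j|)]) w2 hw2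
    obtain ⟨hb1, hl1', hs1, hB1, hw1i, hw1j⟩ := hm1
    obtain ⟨hb2, hl2', hs2, hB2', hw2i, hw2j⟩ := hm2
    -- strict card decrease for w1
    have hcard1 : (univ.filter (fun k : Fin n => 0 < |w1 k| ∧ |w1 k| < α)).card ≤ b := by
      have hss : (univ.filter (fun k : Fin n => 0 < |w1 k| ∧ |w1 k| < α)) ⊂
          (univ.filter (fun k : Fin n => 0 < |v k| ∧ |v k| < α)) := by
        refine Finset.ssubset_iff_of_subset hB1 |>.mpr ?_
        rcases min_cases (α - |v i|) (|v j|) with ⟨hmin, _⟩ | ⟨hmin, _⟩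
        · refine ⟨i, by simp only [mem_filter, mem_univ, true_and]; exact hiB, ?_⟩
          simp only [mem_filter, mem_univ, true_and, not_and, not_lt]
          intro _
          rw [hw1i, htp, hmin]; linarith
        · refine ⟨j, by simp only [mem_filter, mem_univ, true_and]; exact hjB, ?_⟩
          simp only [mem_filter, mem_univ, true_and, not_and, not_lt]
          rw [hw1j, htp, hmin]
          intro h; linarith
      have := Finset.card_lt_card hss
      omega
    have hcard2 : (univ.filter (fun k : Fin n => 0 < |w2 k| ∧ |w2 k| < α)).card ≤ b := by
      have hss : (univ.filter (fun k : Fin n => 0 < |w2 k| ∧ |w2 k| < α)) ⊂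
          (univ.filter (fun k : Fin n => 0 < |v k| ∧ |v k| < α)) := by
        refine Finset.ssubset_iff_of_subset hB2' |>.mpr ?_
        rcases min_cases (|v i|) (α - |v j|) with ⟨hmin, _⟩ | ⟨hmin, _⟩
        · refine ⟨i, by simp only [mem_filter, mem_univ, true_and]; exact hiB, ?_⟩
          simp only [mem_filter, mem_univ, true_and, not_and, not_lt]
          rw [hw2i, htm, hmin]
          intro h; linarith
        · refine ⟨j, by simp only [mem_filter, mem_univ, true_and]; exact hjB, ?_⟩
          simp only [mem_filter, mem_univ, true_and, not_and, not_lt]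
          intro _
          rw [hw2j, htm, hmin]; linarith
      have := Finset.card_lt_card hss
      omega
    have hmem1 : w1 ∈ convexHull ℝ (Uset s α v) :=
      convexHull_mono (Uset_mono hs1 hl1') (ih w1 hcard1 hb1 (by rw [hl1']; exact hl1))
    have hmem2 : w2 ∈ convexHull ℝ (Uset s α v) :=
      convexHull_mono (Uset_mono hs2 hl2') (ih w2 hcard2 hb2 (by rw [hl2']; exact hl1))
    -- convex combination
    have hsumpos : 0 < tp + tm := by linarith
    set lam := tm / (tp + tm) with hlam
    set mu := tp / (tp + tm) with hmu
    have hlam0 : 0 ≤ lam := by positivity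
    have hmu0 : 0 ≤ mu := by positivity
    have hlm : lam + mu = 1 := by
      rw [hlam, hmu, ← add_div, add_comm tm tp, div_self (ne_of_gt hsumpos)]
    have e1i : w1 i = σi * (|v i| + tp) := by rw [hw1]; simp
    have e2i : w2 i = σi * (|v i| + -tm) := by rw [hw2]; simp
    have e1j : w1 j = σj * (|v j| - tp) := by rw [hw1]; simp [Ne.symm hij]
    have e2j : w2 j = σj * (|v j| - -tm) := by rw [hw2]; simp [Ne.symm hij]
    have hcomb : v = lam • w1 + mu • w2 := by
      funext k
      simp only [Pi.add_apply, Pi.smul_apply, smul_eq_mul]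
      by_cases hki : k = i
      · rw [hki, e1i, e2i]
        have : lam * (σi * (|v i| + tp)) + mu * (σi * (|v i| + -tm))
            = σi * ((lam + mu) * |v i| + (lam * tp - mu * tm)) := by ring
        rw [this, hlm]
        have : lam * tp - mu * tm = 0 := by
          rw [hlam, hmu]; field_simp; ring
        rw [this, add_zero, one_mul, hσiv]
      by_cases hkj : k = j
      · rw [hkj, e1j, e2j]
        have : lam * (σj * (|v j| - tp)) + mu * (σj * (|v j| - -tm))
            = σj * ((lam + mu) * |v j| + (mu * tm - lam * tp)) := by ring
        rw [this, hlm]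
        have : mu * tm - lam * tp = 0 := by
          rw [hlam, hmu]; field_simp; ring
        rw [this, add_zero, one_mul, hσjv]
      · have e1k : w1 k = v k := by rw [hw1]; simp [hki, hkj]
        have e2k : w2 k = v k := by rw [hw2]; simp [hki, hkj]
        rw [e1k, e2k]
        have : lam * v k + mu * v k = (lam + mu) * v k := by ring
        rw [this, hlm, one_mul]
    have hfin := (convex_convexHull ℝ (Uset s α v)) hmem1 hmem2 hlam0 hmu0 hlm
    rwa [← hcomb] at hfin

/-- sparse representation of a polytope. -/
theorem stmt3 {n : ℕ} (s : ℕ) (hs : 1 ≤ s) (α : ℝ) (hα : 0 < α) (v : Fin n → ℝ) :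
    ((∀ i, |v i| ≤ α) ∧ l1 v ≤ s * α) ↔
      v ∈ convexHull ℝ {u : Fin n → ℝ |
        Function.support u ⊆ Function.support v ∧ sparse s u ∧
          l1 u = l1 v ∧ ∀ i, |u i| ≤ α} := by
  constructor
  · rintro ⟨h1, h2⟩
    exact key s α hα _ v le_rfl h1 h2
  · intro h
    have hC : convexHull ℝ {u : Fin n → ℝ |
        Function.support u ⊆ Function.support v ∧ sparse s u ∧
          l1 u = l1 v ∧ ∀ i, |u i| ≤ α} ⊆
        {u : Fin n → ℝ | (∀ i, |u i| ≤ α) ∧ l1 u ≤ s * α} := by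
      apply convexHull_min
      · rintro u ⟨-, hsp, -, hb⟩
        refine ⟨hb, ?_⟩
        have h1 : l1 u = ∑ k ∈ univ.filter (fun k => u k ≠ 0), |u k| := by
          refine (Finset.sum_subset (Finset.filter_subset _ _) ?_).symm
          intro k _ hk
          simp only [mem_filter, mem_univ, true_and, not_not] at hk
          simp [hk]
        rw [h1]
        calc ∑ k ∈ univ.filter (fun k => u k ≠ 0), |u k|
            ≤ (univ.filter (fun k => u k ≠ 0)).card • α :=
              Finset.sum_le_card_nsmul _ _ _ (fun k _ => hb k)
          _ = ((univ.filter (fun k => u k ≠ 0)).card : ℝ) * α := by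
              rw [nsmul_eq_mul]
          _ ≤ (s : ℝ) * α := by
              apply mul_le_mul_of_nonneg_right _ hα.le
              exact_mod_cast hsp
      · intro x hx y hy a b ha hb hab
        obtain ⟨hx1, hx2⟩ := hx
        obtain ⟨hy1, hy2⟩ := hy
        constructor
        · intro k
          simp only [Pi.add_apply, Pi.smul_apply, smul_eq_mul]
          calc |a * x k + b * y k| ≤ |a * x k| + |b * y k| := abs_add_le _ _
            _ = a * |x k| + b * |y k| := by
                rw [abs_mul, abs_mul, abs_of_nonneg ha, abs_of_nonneg hb]
            _ ≤ a * α + b * α :=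
                add_le_add (mul_le_mul_of_nonneg_left (hx1 k) ha)
                  (mul_le_mul_of_nonneg_left (hy1 k) hb)
            _ = α := by rw [← add_mul, hab, one_mul]
        · show l1 _ ≤ _
          unfold l1
          calc ∑ k, |(a • x + b • y) k| ≤ ∑ k, (a * |x k| + b * |y k|) := by
                apply Finset.sum_le_sum
                intro k _
                simp only [Pi.add_apply, Pi.smul_apply, smul_eq_mul]
                calc |a * x k + b * y k| ≤ |a * x k| + |b * y k| := abs_add_le _ _
                  _ = a * |x k| + b * |y k| := by
                    rw [abs_mul, abs_mul, abs_of_nonneg ha, abs_of_nonneg hb]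
            _ = a * l1 x + b * l1 y := by
                rw [Finset.sum_add_distrib, ← Finset.mul_sum, ← Finset.mul_sum]; rfl
            _ ≤ a * ((s : ℝ) * α) + b * ((s : ℝ) * α) :=
                add_le_add (mul_le_mul_of_nonneg_left hx2 ha)
                  (mul_le_mul_of_nonneg_left hy2 hb)
            _ = (s : ℝ) * α := by rw [← add_mul, hab, one_mul]
    exact hC h
end
end

section
/- Let A ∈ ℝ^{m×N}, 1 ≤ k ≤ N, and ‖·‖_X be a norm on ℝ^N. Suppose that for every index set I ⊆ {1,…,m} and every η₁ ∈ 𝒩(A_I), η₂ ∈ 𝒩(A_{I^c}) one has min{‖η₁‖_X, ‖η₂‖_X} ≤ (C₀/4)·σ_k(η₁ − η₂)_X + (C₀/4)·σ_k(η₁ + η₂)_X. Then there exists a decoder Δ: ℝ^m → ℝ^N such that for all x ∈ ℝ^N, min{‖x − Δ(|Ax|)‖_X, ‖x + Δ(|Ax|)‖_X} ≤ C₀·σ_k(x)_X. -/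
open Finset

noncomputable section

section Aux

variable {N : ℕ} {X : (Fin N → ℝ) → ℝ}

lemma myX_zero (hX : IsNorm X) : X 0 = 0 := by
  have := hX.2.1 0 0
  simpa using this

lemma myX_neg (hX : IsNorm X) (v : Fin N → ℝ) : X (-v) = X v := by
  have := hX.2.1 (-1) v
  simpa using this

lemma myX_nonneg (hX : IsNorm X) (v : Fin N → ℝ) : 0 ≤ X v := by
  have h1 := hX.1 v (-v)
  rw [add_neg_cancel, myX_zero hX, myX_neg hX] at h1
  linarith

lemma mysparse_zero {k : ℕ} : sparse k (0 : Fin N → ℝ) := by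
  simp [sparse]

lemma mysparse_smul {k : ℕ} {c : ℝ} (hc : c ≠ 0) {u : Fin N → ℝ} (hu : sparse k u) :
    sparse k (c • u) := by
  have hsub : (Finset.univ.filter (fun i => (c • u) i ≠ 0)) ⊆
      (Finset.univ.filter (fun i => u i ≠ 0)) := by
    intro i hi
    simp only [Finset.mem_filter, Finset.mem_univ, true_and, ne_eq, Pi.smul_apply,
      smul_eq_mul, mul_eq_zero, not_or] at hi ⊢
    exact hi.2
  exact le_trans (Finset.card_le_card hsub) hu

lemma mysigma_nonempty (k : ℕ) (x : Fin N → ℝ) :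
    {t | ∃ z : Fin N → ℝ, sparse k z ∧ t = X (x - z)}.Nonempty :=
  ⟨X (x - 0), 0, mysparse_zero, rfl⟩

lemma mysigma_bdd (hX : IsNorm X) (k : ℕ) (x : Fin N → ℝ) :
    BddBelow {t | ∃ z : Fin N → ℝ, sparse k z ∧ t = X (x - z)} := by
  refine ⟨0, ?_⟩
  rintro t ⟨z, hz, rfl⟩
  exact myX_nonneg hX _

lemma mysigma_le (hX : IsNorm X) {k : ℕ} {x u : Fin N → ℝ} (hu : sparse k u) :
    sigmaX X k x ≤ X (x - u) :=
  csInf_le (mysigma_bdd hX k x) ⟨u, hu, rfl⟩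

lemma myle_sigma (hX : IsNorm X) {k : ℕ} {x : Fin N → ℝ} {c : ℝ}
    (h : ∀ u, sparse k u → c ≤ X (x - u)) : c ≤ sigmaX X k x := by
  apply le_csInf (mysigma_nonempty k x)
  rintro t ⟨u, hu, rfl⟩
  exact h u hu

lemma mysigma_nonneg (hX : IsNorm X) (k : ℕ) (x : Fin N → ℝ) : 0 ≤ sigmaX X k x :=
  myle_sigma hX fun u _ => myX_nonneg hX _

lemma mysigma_smul_le (hX : IsNorm X) (k : ℕ) (c : ℝ) (hc : c ≠ 0) (x : Fin N → ℝ) :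
    sigmaX X k (c • x) ≤ |c| * sigmaX X k x := by
  have hcpos : 0 < |c| := abs_pos.mpr hc
  have key : |c|⁻¹ * sigmaX X k (c • x) ≤ sigmaX X k x := by
    apply myle_sigma hX
    intro u hu
    rw [inv_mul_le_iff₀ hcpos]
    have h1 : sigmaX X k (c • x) ≤ X (c • x - c • u) := mysigma_le hX (mysparse_smul hc hu)
    have h2 : X (c • x - c • u) = |c| * X (x - u) := by
      rw [← smul_sub]; exact hX.2.1 c (x - u)
    exact h1.trans_eq h2
  calc sigmaX X k (c • x) = |c| * (|c|⁻¹ * sigmaX X k (c • x)) := by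
        field_simp
    _ ≤ |c| * sigmaX X k x := by
        exact mul_le_mul_of_nonneg_left key (le_of_lt hcpos)

lemma mysigma_smul (hX : IsNorm X) (k : ℕ) (c : ℝ) (hc : c ≠ 0) (x : Fin N → ℝ) :
    sigmaX X k (c • x) = |c| * sigmaX X k x := by
  refine le_antisymm (mysigma_smul_le hX k c hc x) ?_
  have h2 := mysigma_smul_le hX k c⁻¹ (inv_ne_zero hc) (c • x)
  rw [smul_smul, inv_mul_cancel₀ hc, one_smul, abs_inv] at h2
  have hcpos : 0 < |c| := abs_pos.mpr hc
  calc |c| * sigmaX X k x ≤ |c| * (|c|⁻¹ * sigmaX X k (c • x)) :=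
        mul_le_mul_of_nonneg_left h2 (le_of_lt hcpos)
    _ = sigmaX X k (c • x) := by field_simp

lemma mysigma_neg (hX : IsNorm X) (k : ℕ) (x : Fin N → ℝ) :
    sigmaX X k (-x) = sigmaX X k x := by
  have := mysigma_smul hX k (-1) (by norm_num) x
  simpa using this


lemma myX_sum (hX : IsNorm X) (s : Finset (Fin N)) (f : Fin N → (Fin N → ℝ)) :
    X (∑ i ∈ s, f i) ≤ ∑ i ∈ s, X (f i) := by
  induction s using Finset.cons_induction with
  | empty => simp [myX_zero hX]
  | cons a s ha ih =>
    rw [Finset.sum_cons, Finset.sum_cons]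
    exact le_trans (hX.1 _ _) (by linarith)

lemma myX_le_norm (hX : IsNorm X) :
    ∃ M : ℝ, 0 ≤ M ∧ ∀ v : Fin N → ℝ, X v ≤ M * ‖v‖ := by
  refine ⟨∑ i, X (Pi.single i 1), Finset.sum_nonneg fun i _ => myX_nonneg hX _, fun v => ?_⟩
  have hv : v = ∑ i, (v i) • (Pi.single i (1:ℝ) : Fin N → ℝ) := by
    funext j
    simp [Pi.single_apply]
  calc X v = X (∑ i, (v i) • (Pi.single i (1:ℝ) : Fin N → ℝ)) := by rw [← hv]
    _ ≤ ∑ i, X ((v i) • (Pi.single i (1:ℝ) : Fin N → ℝ)) := myX_sum hX _ _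
    _ = ∑ i, |v i| * X (Pi.single i 1) := by simp [hX.2.1]
    _ ≤ ∑ i, ‖v‖ * X (Pi.single i 1) := by
        apply Finset.sum_le_sum
        intro i _
        apply mul_le_mul_of_nonneg_right _ (myX_nonneg hX _)
        simpa using norm_le_pi_norm v i
    _ = (∑ i, X (Pi.single i 1)) * ‖v‖ := by rw [← Finset.mul_sum, mul_comm]

lemma myX_cont (hX : IsNorm X) : Continuous X := by
  obtain ⟨M, hM0, hM⟩ := myX_le_norm hX
  have hlip : LipschitzWith (Real.toNNReal M) X := by
    apply LipschitzWith.of_dist_le_mul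
    intro a b
    rw [Real.coe_toNNReal M hM0, Real.dist_eq, dist_eq_norm]
    have h1 : X a ≤ X b + X (a - b) := by
      have := hX.1 b (a - b)
      rwa [show b + (a - b) = a by abel] at this
    have h2 : X b ≤ X a + X (a - b) := by
      have := hX.1 a (b - a)
      rw [show a + (b - a) = b by abel] at this
      rwa [show b - a = -(a - b) by abel, myX_neg hX] at this
    have h3 : X (a - b) ≤ M * ‖a - b‖ := hM _
    rw [abs_sub_le_iff]
    constructor <;> linarith
  exact hlip.continuous

lemma myX_coercive (hX : IsNorm X) (hN : 0 < N) :
    ∃ c > 0, ∀ v : Fin N → ℝ, c * ‖v‖ ≤ X v := by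
  haveI : Nonempty (Fin N) := ⟨⟨0, hN⟩⟩
  have hsph : (Metric.sphere (0 : Fin N → ℝ) 1).Nonempty :=
    NormedSpace.sphere_nonempty.mpr zero_le_one
  obtain ⟨v₁, hv₁, hmin⟩ := (isCompact_sphere (0 : Fin N → ℝ) 1).exists_isMinOn hsph
    (myX_cont hX).continuousOn
  have hv₁n : ‖v₁‖ = 1 := by simpa using hv₁
  have hc : 0 < X v₁ := by
    rcases (myX_nonneg hX v₁).lt_or_eq with h | h
    · exact h
    · exfalso
      have := hX.2.2 v₁ h.symm
      rw [this] at hv₁n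
      simp at hv₁n
  refine ⟨X v₁, hc, fun v => ?_⟩
  by_cases hv : v = 0
  · simp [hv, myX_zero hX]
  · have hvn : 0 < ‖v‖ := norm_pos_iff.mpr hv
    set w : Fin N → ℝ := ‖v‖⁻¹ • v with hw
    have hwsph : w ∈ Metric.sphere (0 : Fin N → ℝ) 1 := by
      simp only [mem_sphere_iff_norm, sub_zero, hw, norm_smul, norm_inv, norm_norm]
      field_simp
    have h1 : X v₁ ≤ X w := hmin hwsph
    have h2 : X v = ‖v‖ * X w := by
      have hvw : v = ‖v‖ • w := by
        rw [hw, smul_smul]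
        field_simp
        rw [one_smul]
      conv_lhs => rw [hvw]
      rw [hX.2.1, abs_of_pos hvn]
    rw [h2, mul_comm (X v₁) ‖v‖]
    exact mul_le_mul_of_nonneg_left h1 (le_of_lt hvn)

lemma myX_attain (hX : IsNorm X) (hN : 0 < N) (C : Set (Fin N → ℝ)) (hC : IsClosed C)
    (hne : C.Nonempty) : ∃ v ∈ C, ∀ w ∈ C, X v ≤ X w := by
  obtain ⟨c, hc, hcoer⟩ := myX_coercive hX hN
  obtain ⟨v₀, hv₀⟩ := hne
  set R := X v₀ / c with hR
  have hball : ∀ w : Fin N → ℝ, X w ≤ X v₀ → w ∈ Metric.closedBall (0 : Fin N → ℝ) R := by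
    intro w hw
    rw [Metric.mem_closedBall, dist_zero_right]
    rw [hR, le_div_iff₀ hc, mul_comm]
    exact le_trans (hcoer w) hw
  have hK : IsCompact (C ∩ Metric.closedBall 0 R) :=
    (isCompact_closedBall (0 : Fin N → ℝ) R).inter_left hC
  have hKne : (C ∩ Metric.closedBall 0 R).Nonempty := ⟨v₀, hv₀, hball v₀ le_rfl⟩
  obtain ⟨v, hv, hmin⟩ := hK.exists_isMinOn hKne (myX_cont hX).continuousOn
  refine ⟨v, hv.1, fun w hw => ?_⟩
  by_cases hcase : X w ≤ X v₀
  · exact hmin ⟨hw, hball w hcase⟩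
  · have : X v ≤ X v₀ := hmin ⟨hv₀, hball v₀ le_rfl⟩
    linarith

end Aux

def suppSubmodule {N : ℕ} (S : Finset (Fin N)) : Submodule ℝ (Fin N → ℝ) where
  carrier := {u | ∀ j ∉ S, u j = 0}
  add_mem' := by
    intro a b ha hb j hj
    simp [Pi.add_apply, ha j hj, hb j hj]
  zero_mem' := by
    intro j hj
    rfl
  smul_mem' := by
    intro c a ha j hj
    simp [Pi.smul_apply, ha j hj]

section Closed

variable {m N : ℕ}

lemma isClosed_T (A : Matrix (Fin m) (Fin N) ℝ) (y : Fin m → ℝ) (ε : Fin m → Bool)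
    (S : Finset (Fin N)) :
    IsClosed {v : Fin N → ℝ | ∃ z, (∀ i, A.mulVec z i = if ε i then y i else -(y i)) ∧
      ∀ j ∉ S, v j = z j} := by
  set T := {v : Fin N → ℝ | ∃ z, (∀ i, A.mulVec z i = if ε i then y i else -(y i)) ∧
      ∀ j ∉ S, v j = z j} with hTdef
  rcases Set.eq_empty_or_nonempty T with hE | ⟨v₀, z₀, hz₀, hv₀⟩
  · rw [hE]; exact isClosed_empty
  · have hTeq : T = (fun w => v₀ + w) ''
        ((LinearMap.ker (Matrix.mulVecLin A) ⊔ suppSubmodule S : Submodule ℝ (Fin N → ℝ)) :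
          Set (Fin N → ℝ)) := by
      ext v
      constructor
      · rintro ⟨z, hz, hvz⟩
        refine ⟨v - v₀, ?_, by funext j; simp only [Pi.add_apply, Pi.sub_apply]; ring⟩
        rw [SetLike.mem_coe, Submodule.mem_sup]
        refine ⟨z - z₀, ?_, (v - z) - (v₀ - z₀), ?_, by abel⟩
        · rw [LinearMap.mem_ker]
          funext i
          simp only [Matrix.mulVecLin_apply, Matrix.mulVec_sub, Pi.sub_apply, hz i, hz₀ i,
            sub_self, Pi.zero_apply]
        · intro j hj
          simp [Pi.sub_apply, hvz j hj, hv₀ j hj]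
      · rintro ⟨w, hw, rfl⟩
        rw [SetLike.mem_coe, Submodule.mem_sup] at hw
        obtain ⟨a, ha, b, hb, rfl⟩ := hw
        refine ⟨z₀ + a, ?_, ?_⟩
        · intro i
          have ha0 : A.mulVec a = 0 := by
            rw [LinearMap.mem_ker] at ha
            simpa [Matrix.mulVecLin_apply] using ha
          rw [Matrix.mulVec_add, Pi.add_apply, ha0, Pi.zero_apply, add_zero]
          exact hz₀ i
        · intro j hj
          have hbj : b j = 0 := hb j hj
          simp [Pi.add_apply, hv₀ j hj, hbj]
    rw [hTeq]
    exact ((Homeomorph.addLeft v₀).isClosed_image).mpr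
      (Submodule.closed_of_finiteDimensional _)

lemma isClosed_D (k : ℕ) (A : Matrix (Fin m) (Fin N) ℝ) (y : Fin m → ℝ)
    (hy0 : ∀ i, 0 ≤ y i) :
    IsClosed {v : Fin N → ℝ | ∃ z u, absMulVec A z = y ∧ sparse k u ∧ v = z - u} := by
  classical
  have hD : {v : Fin N → ℝ | ∃ z u, absMulVec A z = y ∧ sparse k u ∧ v = z - u} =
      ⋃ ε : Fin m → Bool, ⋃ S ∈ {S : Finset (Fin N) | S.card ≤ k},
        {v : Fin N → ℝ | ∃ z, (∀ i, A.mulVec z i = if ε i then y i else -(y i)) ∧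
          ∀ j ∉ S, v j = z j} := by
    ext v
    simp only [Set.mem_setOf_eq, Set.mem_iUnion, exists_prop]
    constructor
    · rintro ⟨z, u, hz, hu, rfl⟩
      refine ⟨fun i => decide (A.mulVec z i = y i),
        Finset.univ.filter (fun j => u j ≠ 0), hu, z, ?_, ?_⟩
      · intro i
        by_cases hi : A.mulVec z i = y i
        · simp [hi]
        · have habs : |A.mulVec z i| = y i := congrFun hz i
          have hzi : A.mulVec z i = -(y i) := ((abs_eq (hy0 i)).mp habs).resolve_left hi
          have hd : decide (A.mulVec z i = y i) = false := decide_eq_false hi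
          simp only [hd]
          simpa using hzi
      · intro j hj
        have huj : u j = 0 := by simpa using hj
        simp [Pi.sub_apply, huj]
    · rintro ⟨ε, S, hS, z, hz, hvz⟩
      refine ⟨z, z - v, ?_, ?_, by funext j; simp⟩
      · funext i
        show |A.mulVec z i| = y i
        rw [hz i]
        split <;> simp [abs_of_nonneg (hy0 i)]
      · have hsub : Finset.univ.filter (fun j => (z - v) j ≠ 0) ⊆ S := by
          intro j hj
          simp only [Finset.mem_filter, Finset.mem_univ, true_and, ne_eq, Pi.sub_apply] at hj
          by_contra hjS
          exact hj (by rw [hvz j hjS]; ring)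
        exact le_trans (Finset.card_le_card hsub) hS
  rw [hD]
  apply isClosed_iUnion_of_finite
  intro ε
  exact Set.Finite.isClosed_biUnion (Set.toFinite _) fun S _ => isClosed_T A y ε S

lemma exists_sigma_min {k : ℕ} (hN : 0 < N) (A : Matrix (Fin m) (Fin N) ℝ)
    (X : (Fin N → ℝ) → ℝ) (hX : IsNorm X) (y : Fin m → ℝ)
    (hfeas : ∃ z, absMulVec A z = y) :
    ∃ z, absMulVec A z = y ∧ ∀ w, absMulVec A w = y → sigmaX X k z ≤ sigmaX X k w := by
  obtain ⟨z₁, hz₁⟩ := hfeas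
  have hy0 : ∀ i, 0 ≤ y i := by
    intro i
    rw [← hz₁]
    exact abs_nonneg _
  have hne : {v : Fin N → ℝ | ∃ z u, absMulVec A z = y ∧ sparse k u ∧ v = z - u}.Nonempty :=
    ⟨z₁, z₁, 0, hz₁, mysparse_zero, (sub_zero z₁).symm⟩
  obtain ⟨v, hv, hminv⟩ := myX_attain hX hN _ (isClosed_D k A y hy0) hne
  obtain ⟨z, u, hz, hu, rfl⟩ := hv
  refine ⟨z, hz, fun w hw => ?_⟩
  have h1 : sigmaX X k z ≤ X (z - u) := mysigma_le hX hu
  have h2 : X (z - u) ≤ sigmaX X k w :=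
    myle_sigma hX fun u' hu' => hminv (w - u') ⟨w, u', hw, hu', rfl⟩
  linarith

end Closed


/-- sufficient null space condition for phaseless instance optimality. -/
theorem stmt7 {m N k : ℕ} (hk1 : 1 ≤ k) (hkN : k ≤ N)
    (A : Matrix (Fin m) (Fin N) ℝ) (X : (Fin N → ℝ) → ℝ) (hX : IsNorm X) (C₀ : ℝ)
    (h : ∀ I : Finset (Fin m), ∀ η₁ η₂ : Fin N → ℝ,
      (∀ i ∈ I, A.mulVec η₁ i = 0) → (∀ i ∉ I, A.mulVec η₂ i = 0) →
      min (X η₁) (X η₂) ≤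
        C₀ / 4 * sigmaX X k (η₁ - η₂) + C₀ / 4 * sigmaX X k (η₁ + η₂)) :
    ∃ Δ : (Fin m → ℝ) → (Fin N → ℝ), ∀ x : Fin N → ℝ,
      min (X (x - Δ (absMulVec A x))) (X (x + Δ (absMulVec A x))) ≤ C₀ * sigmaX X k x := by
  classical
  have hN : 0 < N := lt_of_lt_of_le hk1 hkN
  refine ⟨fun y => if hfe : ∃ z, absMulVec A z = y then
      (exists_sigma_min (k := k) hN A X hX y hfe).choose else 0, fun x => ?_⟩
  have hfe : ∃ z, absMulVec A z = absMulVec A x := ⟨x, rfl⟩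
  simp only [dif_pos hfe]
  obtain ⟨hz, hmin⟩ := (exists_sigma_min (k := k) hN A X hX (absMulVec A x) hfe).choose_spec
  set z := (exists_sigma_min (k := k) hN A X hX (absMulVec A x) hfe).choose with hzdef
  have hσ : sigmaX X k z ≤ sigmaX X k x := hmin x rfl
  set I : Finset (Fin m) := Finset.univ.filter (fun i => A.mulVec z i = A.mulVec x i) with hI
  have c1 : ∀ i ∈ I, A.mulVec (x - z) i = 0 := by
    intro i hi
    rw [hI, Finset.mem_filter] at hi
    rw [Matrix.mulVec_sub, Pi.sub_apply, hi.2, sub_self]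
  have c2 : ∀ i ∉ I, A.mulVec (x + z) i = 0 := by
    intro i hi
    have hne : A.mulVec z i ≠ A.mulVec x i := by
      intro hcon
      exact hi (by rw [hI, Finset.mem_filter]; exact ⟨Finset.mem_univ i, hcon⟩)
    have habs : |A.mulVec z i| = |A.mulVec x i| := congrFun hz i
    rcases abs_eq_abs.mp habs with h' | h'
    · exact absurd h' hne
    · rw [Matrix.mulVec_add, Pi.add_apply, h']
      ring
  have hmain := h I (x - z) (x + z) c1 c2
  have e1 : (x - z) - (x + z) = (-2 : ℝ) • z := by
    funext j; simp only [Pi.sub_apply, Pi.add_apply, Pi.smul_apply, smul_eq_mul]; ring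
  have e2 : (x - z) + (x + z) = (2 : ℝ) • x := by
    funext j; simp only [Pi.sub_apply, Pi.add_apply, Pi.smul_apply, smul_eq_mul]; ring
  rw [e1, e2, mysigma_smul hX k (-2) (by norm_num) z, mysigma_smul hX k 2 (by norm_num) x]
    at hmain
  rw [show |(-2 : ℝ)| = 2 by norm_num, show |(2 : ℝ)| = 2 by norm_num] at hmain
  have hC : C₀ * sigmaX X k z ≤ C₀ * sigmaX X k x := by
    rcases le_or_gt 0 C₀ with hc | hc
    · exact mul_le_mul_of_nonneg_left hσ hc
    · have hz0 : ∀ v : Fin N → ℝ, sigmaX X k v = 0 := by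
        intro v
        have h0 := h Finset.univ 0 v (by intro i _; simp [Matrix.mulVec_zero])
          (by intro i hi; exact absurd (Finset.mem_univ i) hi)
        rw [zero_sub, zero_add, mysigma_neg hX k v, myX_zero hX] at h0
        have h1 : min (0 : ℝ) (X v) = 0 := min_eq_left (myX_nonneg hX v)
        rw [h1] at h0
        have h2 := mysigma_nonneg hX k v
        nlinarith
      rw [hz0 z, hz0 x]
  calc min (X (x - z)) (X (x + z)) ≤ C₀ / 4 * (2 * sigmaX X k z) + C₀ / 4 * (2 * sigmaX X k x) :=
        hmain
    _ ≤ C₀ * sigmaX X k x := by linarith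
end
end

section
/- Let A ∈ ℝ^{m×N}, 1 ≤ k ≤ N, and ‖·‖_X be a norm on ℝ^N. Suppose there exists a decoder Δ: ℝ^m → ℝ^N such that min{‖x − Δ(|Ax|)‖_X, ‖x + Δ(|Ax|)‖_X} ≤ C₀·σ_k(x)_X for all x ∈ ℝ^N. Then for every index set I ⊆ {1,…,m} and every η₁ ∈ 𝒩(A_I), η₂ ∈ 𝒩(A_{I^c}), min{‖η₁‖_X, ‖η₂‖_X} ≤ (C₀/2)·σ_k(η₁ − η₂)_X + (C₀/2)·σ_k(η₁ + η₂)_X. -/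
open Finset

noncomputable section

lemma isnorm_nonneg {N : ℕ} {X : (Fin N → ℝ) → ℝ} (hX : IsNorm X) (x : Fin N → ℝ) :
    0 ≤ X x := by
  have h0 : X 0 = 0 := by simpa using hX.2.1 0 0
  have hneg : X (-x) = X x := by
    have := hX.2.1 (-1) x
    simpa using this
  have := hX.1 x (-x)
  simp [h0, hneg] at this
  linarith

lemma sparse_smul {N k : ℕ} (c : ℝ) {z : Fin N → ℝ} (h : sparse k z) : sparse k (c • z) := by
  refine le_trans (Finset.card_le_card ?_) h
  intro i hi
  simp only [Finset.mem_filter, Finset.mem_univ, true_and] at hi ⊢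
  intro hz
  exact hi (by simp [Pi.smul_apply, hz])

lemma sigmaX_nonempty {N : ℕ} (X : (Fin N → ℝ) → ℝ) (k : ℕ) (x : Fin N → ℝ) :
    {t | ∃ z : Fin N → ℝ, sparse k z ∧ t = X (x - z)}.Nonempty :=
  ⟨X (x - 0), 0, by simp [sparse], rfl⟩

lemma sigmaX_bdd {N : ℕ} {X : (Fin N → ℝ) → ℝ} (hX : IsNorm X) (k : ℕ) (x : Fin N → ℝ) :
    BddBelow {t | ∃ z : Fin N → ℝ, sparse k z ∧ t = X (x - z)} :=
  ⟨0, fun t ⟨z, _, ht⟩ => ht ▸ isnorm_nonneg hX _⟩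

lemma sigmaX_le {N : ℕ} {X : (Fin N → ℝ) → ℝ} (hX : IsNorm X) (k : ℕ) (x z : Fin N → ℝ)
    (hz : sparse k z) : sigmaX X k x ≤ X (x - z) :=
  csInf_le (sigmaX_bdd hX k x) ⟨z, hz, rfl⟩

lemma sigmaX_smul_le {N : ℕ} {X : (Fin N → ℝ) → ℝ} (hX : IsNorm X) (k : ℕ) (c : ℝ)
    (x : Fin N → ℝ) : sigmaX X k (c • x) ≤ |c| * sigmaX X k x := by
  rcases eq_or_ne c 0 with rfl | hc
  · have h0 : X 0 = 0 := by simpa using hX.2.1 0 0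
    have : sigmaX X k ((0:ℝ) • x) ≤ X ((0:ℝ) • x - 0) :=
      sigmaX_le hX k _ 0 (by simp [sparse])
    simp only [zero_smul, sub_zero, h0] at this
    simpa using this
  have hcpos : 0 < |c| := abs_pos.mpr hc
  rw [mul_comm, ← div_le_iff₀ hcpos]
  refine le_csInf (sigmaX_nonempty X k x) ?_
  rintro t ⟨z, hz, rfl⟩
  rw [div_le_iff₀ hcpos, mul_comm]
  have : |c| * X (x - z) = X (c • x - c • z) := by
    rw [← smul_sub, hX.2.1]
  rw [this]
  exact sigmaX_le hX k _ _ (sparse_smul c hz)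

lemma sigmaX_smul {N : ℕ} {X : (Fin N → ℝ) → ℝ} (hX : IsNorm X) (k : ℕ) {c : ℝ} (hc : c ≠ 0)
    (x : Fin N → ℝ) : sigmaX X k (c • x) = |c| * sigmaX X k x := by
  refine le_antisymm (sigmaX_smul_le hX k c x) ?_
  have h2 := sigmaX_smul_le hX k c⁻¹ (c • x)
  rw [smul_smul, inv_mul_cancel₀ hc, one_smul, abs_inv] at h2
  have hcpos : 0 < |c| := abs_pos.mpr hc
  have h3 := mul_le_mul_of_nonneg_left h2 hcpos.le
  rwa [← mul_assoc, mul_inv_cancel₀ hcpos.ne', one_mul] at h3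

/-- necessary null space condition for phaseless instance optimality. -/
theorem stmt8 {m N k : ℕ} (hk1 : 1 ≤ k) (hkN : k ≤ N)
    (A : Matrix (Fin m) (Fin N) ℝ) (X : (Fin N → ℝ) → ℝ) (hX : IsNorm X) (C₀ : ℝ)
    (Δ : (Fin m → ℝ) → (Fin N → ℝ))
    (hΔ : ∀ x : Fin N → ℝ,
      min (X (x - Δ (absMulVec A x))) (X (x + Δ (absMulVec A x))) ≤ C₀ * sigmaX X k x) :
    ∀ I : Finset (Fin m), ∀ η₁ η₂ : Fin N → ℝ,
      (∀ i ∈ I, A.mulVec η₁ i = 0) → (∀ i ∉ I, A.mulVec η₂ i = 0) →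
      min (X η₁) (X η₂) ≤
        C₀ / 2 * sigmaX X k (η₁ - η₂) + C₀ / 2 * sigmaX X k (η₁ + η₂) := by
  intro I η₁ η₂ h1 h2
  set u : Fin N → ℝ := (1/2 : ℝ) • (η₁ + η₂) with hu
  set v : Fin N → ℝ := (1/2 : ℝ) • (η₁ - η₂) with hv
  have habs : absMulVec A v = absMulVec A u := by
    funext i
    simp only [absMulVec, hu, hv, Matrix.mulVec_smul, Matrix.mulVec_add, Matrix.mulVec_sub,
      Pi.smul_apply, Pi.add_apply, Pi.sub_apply, smul_eq_mul]
    by_cases hi : i ∈ I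
    · rw [h1 i hi]
      rw [abs_mul, abs_mul]
      congr 1
      rw [zero_sub, zero_add, abs_neg]
    · rw [h2 i hi]
      ring_nf
  have hXneg : ∀ w, X (-w) = X w := by
    intro w
    have := hX.2.1 (-1) w
    simpa using this
  set d := Δ (absMulVec A u) with hd
  have hu' := hΔ u
  have hv' := hΔ v
  rw [habs] at hv'
  rw [← hd] at hu' hv'
  have hη₁ : η₁ = u + v := by
    funext i; simp [hu, hv]; ring
  have hη₂ : η₂ = u - v := by
    funext i; simp [hu, hv]; ring
  have key : min (X η₁) (X η₂) ≤ C₀ * sigmaX X k u + C₀ * sigmaX X k v := by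
    rcases le_total (X (u - d)) (X (u + d)) with hu2 | hu2 <;>
      rcases le_total (X (v - d)) (X (v + d)) with hv2 | hv2
    · -- u-d, v-d small: η₂ = (u-d) - (v-d)
      refine le_trans (min_le_right _ _) ?_
      have : X η₂ ≤ X (u - d) + X (v - d) := by
        have h := hX.1 (u - d) (-(v - d))
        have he : (u - d) + (-(v - d)) = η₂ := by rw [hη₂]; abel
        rw [he, hXneg] at h
        exact h
      rw [min_eq_left hu2] at hu'
      rw [min_eq_left hv2] at hv'
      linarith
    · -- u-d, v+d small: η₁ = (u-d) + (v+d)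
      refine le_trans (min_le_left _ _) ?_
      have : X η₁ ≤ X (u - d) + X (v + d) := by
        have h := hX.1 (u - d) (v + d)
        have he : (u - d) + (v + d) = η₁ := by rw [hη₁]; abel
        rw [he] at h
        exact h
      rw [min_eq_left hu2] at hu'
      rw [min_eq_right hv2] at hv'
      linarith
    · -- u+d, v-d small: η₁ = (u+d) + (v-d)
      refine le_trans (min_le_left _ _) ?_
      have : X η₁ ≤ X (u + d) + X (v - d) := by
        have h := hX.1 (u + d) (v - d)
        have he : (u + d) + (v - d) = η₁ := by rw [hη₁]; abel
        rw [he] at h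
        exact h
      rw [min_eq_right hu2] at hu'
      rw [min_eq_left hv2] at hv'
      linarith
    · -- u+d, v+d small: η₂ = (u+d) - (v+d)
      refine le_trans (min_le_right _ _) ?_
      have : X η₂ ≤ X (u + d) + X (v + d) := by
        have h := hX.1 (u + d) (-(v + d))
        have he : (u + d) + (-(v + d)) = η₂ := by rw [hη₂]; abel
        rw [he, hXneg] at h
        exact h
      rw [min_eq_right hu2] at hu'
      rw [min_eq_right hv2] at hv'
      linarith
  have hsu : sigmaX X k u = 1/2 * sigmaX X k (η₁ + η₂) := by
    rw [hu, sigmaX_smul hX k (by norm_num : (1/2:ℝ) ≠ 0)]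
    norm_num
  have hsv : sigmaX X k v = 1/2 * sigmaX X k (η₁ - η₂) := by
    rw [hv, sigmaX_smul hX k (by norm_num : (1/2:ℝ) ≠ 0)]
    norm_num
  rw [hsu, hsv] at key
  linarith
end
end
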